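/- Let R be a Noetherian commutative ring, I an ideal of R, and a ∈ I a regular element (non-zero-divisor) of R. Then I is of linear type over R if and only if the natural surjection S_{R/(a)}(I/(a)) ↠ 𝒜_{R↠R/(a)}(I/(a)) from the symmetric algebra of I/(a) over R/(a) onto the Aluffi algebra is an isomorphism. -/

import Mathlib

open Polynomial

variable {R : Type*} [CommRing R]

/-- The defining ideal `(J, J̃)·Rees_R(I)` of the Aluffi algebra inside the Rees algebra. -/
noncomputable def aluffiIdeal (I J : Ideal R) : Ideal (reesAlgebra I) :=
  Ideal.span {x : reesAlgebra I | ∃ a ∈ J, (x : R[X]) = C a ∨ (x : R[X]) = C a * X}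

/-- The (R-embedded) Aluffi algebra of `I/J`, presented as `Rees_R(I)/(J, J̃)Rees_R(I)`. -/
noncomputable abbrev AluffiAlgebra (I J : Ideal R) :=
  reesAlgebra I ⧸ aluffiIdeal I J

/-- The presentation `A[T₁,…,Tₙ] → Rees_A(I)`, `Tᵢ ↦ fᵢ·u`, attached to a family of
elements of `I`. -/
noncomputable def reesPres {A : Type*} [CommRing A] (I : Ideal A) {n : ℕ}
    (f : Fin n → A) (hf : ∀ i, f i ∈ I) :
    MvPolynomial (Fin n) A →ₐ[A] reesAlgebra I :=
  MvPolynomial.aeval fun i =>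
    (⟨Polynomial.C (f i) * Polynomial.X, by
      rw [Polynomial.C_mul_X_eq_monomial]
      exact reesAlgebra.monomial_mem.mpr (by simpa using hf i)⟩ : reesAlgebra I)

/-- An ideal `I` of `A` is of linear type if, for every (equivalently, some) finite
generating family of `I`, the kernel of the presentation `A[T] ↠ Rees_A(I)` is generated
by its elements that are homogeneous of degree 1; i.e. the natural surjection
`S_A(I) ↠ Rees_A(I)` from the symmetric algebra is an isomorphism. -/
def IsLinearType (A : Type*) [CommRing A] (I : Ideal A) : Prop :=
  ∀ (n : ℕ) (f : Fin n → A) (hf : ∀ i, f i ∈ I),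
    Ideal.span (Set.range f) = I →
    RingHom.ker (reesPres I f hf : MvPolynomial (Fin n) A →+* reesAlgebra I) =
      Ideal.span {F : MvPolynomial (Fin n) A |
        F ∈ RingHom.ker (reesPres I f hf : MvPolynomial (Fin n) A →+* reesAlgebra I) ∧
        F.IsHomogeneous 1}

section Aux

theorem aeval_CX_monomial {n : ℕ} (f : Fin n → R) (d : Fin n →₀ ℕ) (c : R) :
    MvPolynomial.aeval (fun i => C (f i) * X) (MvPolynomial.monomial d c)
      = C (MvPolynomial.aeval f (MvPolynomial.monomial d c)) * X ^ d.degree := by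
  rw [MvPolynomial.aeval_monomial, MvPolynomial.aeval_monomial]
  simp only [Finsupp.prod, mul_pow, ← Polynomial.C_pow]
  rw [Finset.prod_mul_distrib, Finset.prod_pow_eq_pow_sum]
  simp only [algebraMap_eq, map_mul, map_prod, map_pow, Algebra.algebraMap_self, RingHom.id_apply]
  rw [Finsupp.degree_apply]
  ring

theorem aeval_CX_homog {n : ℕ} (f : Fin n → R) {t : ℕ} {F : MvPolynomial (Fin n) R}
    (hF : F.IsHomogeneous t) :
    MvPolynomial.aeval (fun i => C (f i) * X) F
      = C (MvPolynomial.aeval f F) * X ^ t := by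
  conv_lhs => rw [F.as_sum]
  conv_rhs => rw [F.as_sum]
  rw [map_sum, map_sum, map_sum, Finset.sum_mul]
  refine Finset.sum_congr rfl fun d hd => ?_
  have hdeg : d.degree = t := by
    by_contra h
    exact (MvPolynomial.mem_support_iff.mp hd) (hF.coeff_eq_zero h)
  rw [aeval_CX_monomial, hdeg]

variable (I : Ideal R) {n : ℕ} (f : Fin n → R) (hf : ∀ i, f i ∈ I)

theorem coe_reesPres (F : MvPolynomial (Fin n) R) :
    ((reesPres I f hf F : reesAlgebra I) : R[X])
      = MvPolynomial.aeval (fun i => C (f i) * X) F := by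
  have := congrArg (fun (φ : MvPolynomial (Fin n) R →ₐ[R] R[X]) => φ F)
    (MvPolynomial.comp_aeval (f := fun i =>
      (⟨Polynomial.C (f i) * Polynomial.X, by
        rw [Polynomial.C_mul_X_eq_monomial]
        exact reesAlgebra.monomial_mem.mpr (by simpa using hf i)⟩ : reesAlgebra I))
      (φ := (reesAlgebra I).val))
  simpa [reesPres] using this

theorem reesPres_homog {t : ℕ} {F : MvPolynomial (Fin n) R} (hF : F.IsHomogeneous t) :
    ((reesPres I f hf F : reesAlgebra I) : R[X]) = C (MvPolynomial.aeval f F) * X ^ t := by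
  rw [coe_reesPres, aeval_CX_homog f hF]

theorem reesPres_eq_zero_iff_homog {t : ℕ} {F : MvPolynomial (Fin n) R}
    (hF : F.IsHomogeneous t) :
    reesPres I f hf F = 0 ↔ MvPolynomial.aeval f F = 0 := by
  rw [← Subtype.coe_inj, reesPres_homog I f hf hF, ZeroMemClass.coe_zero]
  constructor
  · intro h
    have := congrArg (fun p => Polynomial.coeff p t) h
    simp only [Polynomial.coeff_C_mul, Polynomial.coeff_X_pow, if_pos rfl, mul_one,
      Polynomial.coeff_zero] at this
    simpa using this
  · rintro h; rw [h]; simp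

theorem reesPres_eq_zero_iff (F : MvPolynomial (Fin n) R) :
    reesPres I f hf F = 0 ↔
      ∀ t, MvPolynomial.aeval f (MvPolynomial.homogeneousComponent t F) = 0 := by
  rw [← Subtype.coe_inj, coe_reesPres, ZeroMemClass.coe_zero]
  conv_lhs => rw [← MvPolynomial.sum_homogeneousComponent F, map_sum]
  have hcomp : ∀ s, MvPolynomial.aeval (fun i => C (f i) * X)
      (MvPolynomial.homogeneousComponent s F)
      = C (MvPolynomial.aeval f (MvPolynomial.homogeneousComponent s F)) * X ^ s :=
    fun s => aeval_CX_homog f (MvPolynomial.homogeneousComponent_isHomogeneous s F)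
  constructor
  · intro h t
    by_cases ht : t ≤ F.totalDegree
    · have := congrArg (fun p => Polynomial.coeff p t) h
      simp only [Polynomial.finset_sum_coeff, hcomp, Polynomial.coeff_C_mul,
        Polynomial.coeff_X_pow, Polynomial.coeff_zero, mul_ite, mul_one, mul_zero] at this
      rwa [Finset.sum_ite_eq (Finset.range (F.totalDegree + 1)), if_pos
        (Finset.mem_range.mpr (Nat.lt_succ_of_le ht))] at this
    · rw [MvPolynomial.homogeneousComponent_eq_zero _ _ (lt_of_not_ge ht), map_zero]
  · intro h
    refine Finset.sum_eq_zero fun s _ => ?_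
    rw [hcomp, h s, map_zero, zero_mul]


theorem C_mem_rees (a : R) : (C a : R[X]) ∈ reesAlgebra I := by
  have := (reesAlgebra I).algebraMap_mem a
  rwa [Polynomial.algebraMap_eq] at this

theorem CX_mem_rees {a : R} (haI : a ∈ I) : (C a * X : R[X]) ∈ reesAlgebra I := by
  rw [Polynomial.C_mul_X_eq_monomial]
  exact reesAlgebra.monomial_mem.mpr (by simpa using haI)

theorem reesPres_surjective (hgen : Ideal.span (Set.range f) = I) :
    Function.Surjective (reesPres I f hf) := by
  set A := ((reesAlgebra I).val.comp (reesPres I f hf)).range with hA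
  have hle : reesAlgebra I ≤ A := by
    rw [← adjoin_monomial_eq_reesAlgebra]
    apply Algebra.adjoin_le
    rintro x ⟨r, hr, rfl⟩
    have hr' : r ∈ Ideal.span (Set.range f) := by rwa [hgen]
    refine Submodule.span_induction ?_ ?_ ?_ ?_ hr'
    · rintro y ⟨i, rfl⟩
      refine ⟨MvPolynomial.X i, ?_⟩
      show ((reesPres I f hf (MvPolynomial.X i) : reesAlgebra I) : R[X]) = _
      rw [coe_reesPres]
      simp [Polynomial.C_mul_X_eq_monomial]
    · simpa using A.zero_mem
    · intro y z _ _ hy hz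
      rw [map_add]
      exact A.add_mem hy hz
    · intro c y _ hy
      rw [map_smul]
      exact A.smul_mem hy c
  intro y
  obtain ⟨F, hF⟩ := hle y.2
  exact ⟨F, Subtype.ext hF⟩

theorem aluffiIdeal_eq_span (a : R) (haI : a ∈ I) :
    aluffiIdeal I (Ideal.span {a}) =
      Ideal.span {(⟨C a, C_mem_rees I a⟩ : reesAlgebra I),
        (⟨C a * X, CX_mem_rees I haI⟩ : reesAlgebra I)} := by
  apply le_antisymm
  · rw [aluffiIdeal, Ideal.span_le]
    rintro x ⟨b, hb, hx | hx⟩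
    · obtain ⟨c, rfl⟩ := Ideal.mem_span_singleton.mp hb
      have : x = (⟨C a, C_mem_rees I a⟩ : reesAlgebra I) * algebraMap R _ c := by
        apply Subtype.ext
        simpa [Polynomial.algebraMap_eq] using hx
      rw [this]
      exact Ideal.mul_mem_right _ _ (Ideal.subset_span (by simp))
    · obtain ⟨c, rfl⟩ := Ideal.mem_span_singleton.mp hb
      have : x = (⟨C a * X, CX_mem_rees I haI⟩ : reesAlgebra I) * algebraMap R _ c := by
        apply Subtype.ext
        simp only [Subalgebra.coe_mul, Subalgebra.coe_algebraMap, Polynomial.algebraMap_eq]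
        rw [hx, map_mul]
        ring
      rw [this]
      exact Ideal.mul_mem_right _ _ (Ideal.subset_span (by simp))
  · rw [Ideal.span_le]
    rintro x (hx | hx)
    · exact Ideal.subset_span ⟨a, Ideal.mem_span_singleton_self a, Or.inl (by rw [hx])⟩
    · exact Ideal.subset_span ⟨a, Ideal.mem_span_singleton_self a, Or.inr (by rw [hx])⟩


theorem homogComponent_mul_homog1 {n : ℕ} {G : MvPolynomial (Fin n) R}
    (hG : G.IsHomogeneous 1) (B : MvPolynomial (Fin n) R) (k : ℕ) :
    MvPolynomial.homogeneousComponent (k + 1) (G * B)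
      = G * MvPolynomial.homogeneousComponent k B := by
  conv_lhs => rw [← MvPolynomial.sum_homogeneousComponent B, Finset.mul_sum, map_sum]
  have h1 : ∀ m, MvPolynomial.homogeneousComponent (k + 1)
      (G * MvPolynomial.homogeneousComponent m B)
      = if k = m then G * MvPolynomial.homogeneousComponent m B else 0 := by
    intro m
    rw [MvPolynomial.homogeneousComponent_of_mem
      ((MvPolynomial.mem_homogeneousSubmodule _ _).mpr
        (hG.mul (MvPolynomial.homogeneousComponent_isHomogeneous m B)))]
    congr 1
    simp [Nat.add_comm 1 m, Nat.succ_inj]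
  simp_rw [h1]
  rw [Finset.sum_ite_eq (Finset.range (B.totalDegree + 1))]
  split_ifs with h
  · rfl
  · rw [MvPolynomial.homogeneousComponent_eq_zero _ _
      (by simpa using Nat.lt_of_succ_le (Nat.succ_le_of_lt (by
        exact lt_of_not_ge (fun hh => h (Finset.mem_range.mpr (Nat.lt_succ_of_le hh)))))),
      mul_zero]

attribute [local instance] MvPolynomial.gradedAlgebra

theorem homogComponent_mem_span {n : ℕ} {s : Set (MvPolynomial (Fin n) R)}
    (hs : ∀ F ∈ s, F.IsHomogeneous 1) {G : MvPolynomial (Fin n) R}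
    (hG : G ∈ Ideal.span s) (m : ℕ) :
    MvPolynomial.homogeneousComponent m G ∈ Ideal.span s := by
  classical
  have hhom : (Ideal.span s).IsHomogeneous (MvPolynomial.homogeneousSubmodule (Fin n) R) :=
    Ideal.homogeneous_span _ s fun x hx => ⟨1, hs x hx⟩
  have := hhom m hG
  rwa [show ((DirectSum.decompose (MvPolynomial.homogeneousSubmodule (Fin n) R) G m :
      MvPolynomial.homogeneousSubmodule (Fin n) R m) : MvPolynomial (Fin n) R)
      = MvPolynomial.homogeneousComponent m G from
    MvPolynomial.decomposition.decompose'_apply G m] at this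


theorem exists_contraction {n : ℕ} (f : Fin n → R) (a : R)
    (Fa : MvPolynomial (Fin n) R) (hFa1 : Fa.IsHomogeneous 1)
    (hFaval : MvPolynomial.aeval f Fa = a) (k : ℕ)
    (Q : MvPolynomial (Fin n) R) (hQ : Q.IsHomogeneous (k + 1)) :
    ∃ Q', Q'.IsHomogeneous k ∧
      MvPolynomial.C a * Q - Fa * Q' ∈ Ideal.span {F : MvPolynomial (Fin n) R |
        F.IsHomogeneous 1 ∧ MvPolynomial.aeval f F = 0} := by
  classical
  set Z₁ : Ideal (MvPolynomial (Fin n) R) :=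
    Ideal.span {F : MvPolynomial (Fin n) R | F.IsHomogeneous 1 ∧ MvPolynomial.aeval f F = 0}
    with hZ₁
  let M : Submodule R (MvPolynomial (Fin n) R) :=
    { carrier := {P | ∃ P', P'.IsHomogeneous k ∧ MvPolynomial.C a * P - Fa * P' ∈ Z₁}
      add_mem' := by
        rintro P₁ P₂ ⟨P₁', h₁, hm₁⟩ ⟨P₂', h₂, hm₂⟩
        refine ⟨P₁' + P₂', h₁.add h₂, ?_⟩
        have : MvPolynomial.C a * (P₁ + P₂) - Fa * (P₁' + P₂')
            = (MvPolynomial.C a * P₁ - Fa * P₁') + (MvPolynomial.C a * P₂ - Fa * P₂') := by ring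
        rw [this]
        exact Ideal.add_mem _ hm₁ hm₂
      zero_mem' := ⟨0, MvPolynomial.isHomogeneous_zero _ _ _, by simp⟩
      smul_mem' := by
        rintro c P ⟨P', h, hm⟩
        refine ⟨c • P', (MvPolynomial.homogeneousSubmodule (Fin n) R k).smul_mem c
          ((MvPolynomial.mem_homogeneousSubmodule _ _).2 h), ?_⟩
        have : MvPolynomial.C a * (c • P) - Fa * (c • P')
            = c • (MvPolynomial.C a * P - Fa * P') := by
          simp [smul_sub, mul_smul_comm]
        rw [this, MvPolynomial.smul_eq_C_mul]
        exact Ideal.mul_mem_left _ _ hm }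
  suffices hM : Q ∈ M by exact hM
  have hQsum := Q.as_sum
  rw [show Q = ∑ d ∈ Q.support, MvPolynomial.monomial d (MvPolynomial.coeff d Q) from hQsum]
  refine Submodule.sum_mem _ fun d hd => ?_
  -- monomial case
  have hdeg : d.degree = k + 1 := by
    by_contra h
    exact (MvPolynomial.mem_support_iff.mp hd) (hQ.coeff_eq_zero h)
  obtain ⟨i, hi⟩ : ∃ i, d i ≠ 0 := by
    by_contra h
    push_neg at h
    have : d = 0 := Finsupp.ext h
    rw [this] at hdeg
    simp [Finsupp.degree] at hdeg
  set d' : Fin n →₀ ℕ := d - Finsupp.single i 1 with hd'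
  have hdd : d = Finsupp.single i 1 + d' := by
    ext j
    simp only [Finsupp.add_apply, Finsupp.single_apply, hd', Finsupp.tsub_apply]
    by_cases hj : i = j
    · subst hj; simp; omega
    · simp [hj]
  have hadd : ∀ u v : Fin n →₀ ℕ, (u + v).degree = u.degree + v.degree := by
    intro u v
    simp only [Finsupp.degree_eq_weight_one]
    exact map_add (Finsupp.weight (1 : Fin n → ℕ)) u v
  have hsingle : (Finsupp.single i 1 : Fin n →₀ ℕ).degree = 1 := by
    simp [Finsupp.degree_apply, Finsupp.support_single_ne_zero i one_ne_zero]
  have hdeg' : d'.degree = k := by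
    have h1 := hadd (Finsupp.single i 1) d'
    rw [← hdd, hdeg, hsingle] at h1
    omega
  set c'' := MvPolynomial.coeff d Q
  have hhom' : (MvPolynomial.C (f i) * MvPolynomial.monomial d' c'').IsHomogeneous k := by
    have := (MvPolynomial.isHomogeneous_C (Fin n) (f i)).mul
      (MvPolynomial.isHomogeneous_monomial c'' hdeg')
    simpa using this
  refine ⟨MvPolynomial.C (f i) * MvPolynomial.monomial d' c'', hhom', ?_⟩
  have hmon : (MvPolynomial.monomial d c'' : MvPolynomial (Fin n) R)
      = MvPolynomial.X i * MvPolynomial.monomial d' c'' := by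
    rw [hdd, MvPolynomial.monomial_single_add, pow_one]
  have : MvPolynomial.C a * MvPolynomial.monomial d c''
      - Fa * (MvPolynomial.C (f i) * MvPolynomial.monomial d' c'')
      = (MvPolynomial.C a * MvPolynomial.X i - MvPolynomial.C (f i) * Fa)
        * MvPolynomial.monomial d' c'' := by
    rw [hmon]; ring
  rw [this]
  refine Ideal.mul_mem_right _ _ (Ideal.subset_span ⟨?_, ?_⟩)
  · exact ((MvPolynomial.isHomogeneous_C _ _).mul (MvPolynomial.isHomogeneous_X _ _)).sub
      ((MvPolynomial.isHomogeneous_C _ _).mul hFa1)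
  · simp [hFaval]
    rw [show MvPolynomial.eval f Fa = a from hFaval]
    ring


theorem backward_ker_eq {n : ℕ} (I : Ideal R) (f : Fin n → R) (hf : ∀ i, f i ∈ I)
    (a : R) (haI : a ∈ I) (hreg : a ∈ nonZeroDivisors R)
    (hgen : Ideal.span (Set.range f) = I)
    (hAl : RingHom.ker ((Ideal.Quotient.mk (aluffiIdeal I (Ideal.span {a}))).comp
            (reesPres I f hf : MvPolynomial (Fin n) R →+* reesAlgebra I)) =
          Ideal.span ({F : MvPolynomial (Fin n) R | ∃ b ∈ Ideal.span ({a} : Set R),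
              F = MvPolynomial.C b} ∪
            {F : MvPolynomial (Fin n) R | F.IsHomogeneous 1 ∧
              MvPolynomial.aeval f F ∈ Ideal.span ({a} : Set R)})) :
    RingHom.ker (reesPres I f hf : MvPolynomial (Fin n) R →+* reesAlgebra I) =
      Ideal.span {F : MvPolynomial (Fin n) R |
        F ∈ RingHom.ker (reesPres I f hf : MvPolynomial (Fin n) R →+* reesAlgebra I) ∧
        F.IsHomogeneous 1} := by
  classical
  set Z₁ : Ideal (MvPolynomial (Fin n) R) :=
    Ideal.span {F : MvPolynomial (Fin n) R | F.IsHomogeneous 1 ∧ MvPolynomial.aeval f F = 0}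
    with hZ₁
  -- the linear form Fa with value a
  have haI' : a ∈ Ideal.span (Set.range f) := by rwa [hgen]
  obtain ⟨c, hc⟩ := (Submodule.mem_span_range_iff_exists_fun R).mp haI'
  set Fa : MvPolynomial (Fin n) R := ∑ i, MvPolynomial.C (c i) * MvPolynomial.X i with hFadef
  have hFa1 : Fa.IsHomogeneous 1 := by
    rw [← MvPolynomial.mem_homogeneousSubmodule]
    refine Submodule.sum_mem _ fun i _ => ?_
    rw [MvPolynomial.mem_homogeneousSubmodule]
    have := (MvPolynomial.isHomogeneous_C (Fin n) (c i)).mul (MvPolynomial.isHomogeneous_X R i)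
    simpa using this
  have hFaval : MvPolynomial.aeval f Fa = a := by
    rw [hFadef, map_sum]
    simpa [smul_eq_mul] using hc
  -- the main induction
  have main : ∀ (t : ℕ) (F : MvPolynomial (Fin n) R), F.IsHomogeneous t →
      MvPolynomial.aeval f F = 0 → F ∈ Z₁ := by
    intro t
    induction t with
    | zero =>
      intro F hF hval
      have h1 := MvPolynomial.homogeneousComponent_of_mem
        ((MvPolynomial.mem_homogeneousSubmodule 0 F).mpr hF) (m := 0)
      rw [if_pos rfl, MvPolynomial.homogeneousComponent_zero] at h1
      rw [← h1] at hval ⊢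
      rw [MvPolynomial.aeval_C] at hval
      simp only [Algebra.algebraMap_self, RingHom.id_apply] at hval
      rw [hval, map_zero]
      exact Ideal.zero_mem _
    | succ k IH =>
      intro F hF hval
      -- F lies in the Aluffi kernel
      have hFker : F ∈ RingHom.ker ((Ideal.Quotient.mk (aluffiIdeal I (Ideal.span {a}))).comp
          (reesPres I f hf : MvPolynomial (Fin n) R →+* reesAlgebra I)) := by
        rw [RingHom.mem_ker, RingHom.comp_apply]
        have : (reesPres I f hf : MvPolynomial (Fin n) R →+* reesAlgebra I) F = 0 :=
          (reesPres_eq_zero_iff_homog I f hf hF).mpr hval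
        rw [this, map_zero]
      rw [hAl] at hFker
      -- split the span
      have hsplit : Ideal.span ({F : MvPolynomial (Fin n) R | ∃ b ∈ Ideal.span ({a} : Set R),
              F = MvPolynomial.C b} ∪
            {F : MvPolynomial (Fin n) R | F.IsHomogeneous 1 ∧
              MvPolynomial.aeval f F ∈ Ideal.span ({a} : Set R)})
          ≤ Ideal.span {MvPolynomial.C a} ⊔ (Ideal.span {Fa} ⊔ Z₁) := by
        rw [Ideal.span_union]
        apply sup_le
        · apply le_trans ?_ le_sup_left
          rw [Ideal.span_le]
          rintro G ⟨b, hb, rfl⟩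
          obtain ⟨u, rfl⟩ := Ideal.mem_span_singleton.mp hb
          exact Ideal.mem_span_singleton'.mpr ⟨MvPolynomial.C u, by rw [← map_mul, mul_comm]⟩
        · apply le_trans ?_ le_sup_right
          rw [Ideal.span_le]
          rintro G ⟨hG1, hG2⟩
          obtain ⟨u, hu⟩ := Ideal.mem_span_singleton.mp hG2
          have hsub : G - MvPolynomial.C u * Fa ∈ Z₁ := by
            apply Ideal.subset_span
            constructor
            · have := (MvPolynomial.isHomogeneous_C (Fin n) u).mul hFa1
              exact hG1.sub (by simpa using this)
            · rw [map_sub, map_mul, MvPolynomial.aeval_C, hFaval, hu]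
              simp [mul_comm]
          have hmul : MvPolynomial.C u * Fa ∈ Ideal.span {Fa} :=
            Ideal.mem_span_singleton'.mpr ⟨MvPolynomial.C u, rfl⟩
          have := add_mem (Submodule.mem_sup_right hsub) (Submodule.mem_sup_left hmul)
          rwa [sub_add_cancel] at this
      have hFmem := hsplit hFker
      rw [Submodule.mem_sup] at hFmem
      obtain ⟨y, hy, z, hz, hyz⟩ := hFmem
      rw [Submodule.mem_sup] at hz
      obtain ⟨u, hu, g, hg, huz⟩ := hz
      obtain ⟨P, hP⟩ := Ideal.mem_span_singleton'.mp hy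
      obtain ⟨B, hB⟩ := Ideal.mem_span_singleton'.mp hu
      -- take homogeneous components of degree k+1
      set Pk := MvPolynomial.homogeneousComponent (k + 1) P with hPk
      set Bk := MvPolynomial.homogeneousComponent k B with hBk
      set gk := MvPolynomial.homogeneousComponent (k + 1) g with hgk
      have hgkmem : gk ∈ Z₁ :=
        homogComponent_mem_span (fun G hG => hG.1) hg (k + 1)
      have hFeq : F = MvPolynomial.C a * Pk + Fa * Bk + gk := by
        have hFsum : F = y + (u + g) := by rw [huz, hyz]
        have h1 := congrArg (MvPolynomial.homogeneousComponent (k + 1)) hFsum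
        rw [MvPolynomial.homogeneousComponent_of_mem
          ((MvPolynomial.mem_homogeneousSubmodule _ _).mpr hF), if_pos rfl] at h1
        rw [map_add, map_add, ← hP, ← hB, mul_comm P, mul_comm B,
          MvPolynomial.homogeneousComponent_C_mul,
          homogComponent_mul_homog1 hFa1 B k] at h1
        rw [h1, hPk, hBk, hgk]
        ring
      -- Z₁ is contained in the kernel of evaluation
      have hZker : ∀ x ∈ Z₁, MvPolynomial.aeval f x = 0 := by
        intro x hx
        have hle : Z₁ ≤ RingHom.ker
            ((MvPolynomial.aeval f : MvPolynomial (Fin n) R →ₐ[R] R) :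
              MvPolynomial (Fin n) R →+* R) := by
          rw [hZ₁, Ideal.span_le]
          rintro G ⟨_, hG2⟩
          exact hG2
        exact hle hx
      -- evaluate
      have hval2 : a * (MvPolynomial.aeval f Pk + MvPolynomial.aeval f Bk) = 0 := by
        have h2 := congrArg (MvPolynomial.aeval f) hFeq
        rw [hval, map_add, map_add, map_mul, map_mul, MvPolynomial.aeval_C, hFaval,
          hZker gk hgkmem, add_zero] at h2
        simp only [Algebra.algebraMap_self, RingHom.id_apply] at h2
        rw [mul_add]
        exact h2.symm
      have hsum0 : MvPolynomial.aeval f Pk + MvPolynomial.aeval f Bk = 0 :=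
        hreg.2 _ (by rw [mul_comm]; exact hval2)
      -- contraction
      obtain ⟨Q', hQ'h, hQ'mem⟩ := exists_contraction f a Fa hFa1 hFaval k Pk
        (MvPolynomial.homogeneousComponent_isHomogeneous (k + 1) P)
      have hQ'val : MvPolynomial.aeval f Q' = MvPolynomial.aeval f Pk := by
        have h3 := hZker _ hQ'mem
        rw [map_sub, map_mul, map_mul, MvPolynomial.aeval_C, hFaval] at h3
        simp only [Algebra.algebraMap_self, RingHom.id_apply] at h3
        have h4 : (MvPolynomial.aeval f Pk - MvPolynomial.aeval f Q') * a = 0 := by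
          linear_combination h3
        have h5 := hreg.2 _ h4
        exact (sub_eq_zero.mp h5).symm
      have hmem2 : Q' + Bk ∈ Z₁ := by
        apply IH
        · exact hQ'h.add (MvPolynomial.homogeneousComponent_isHomogeneous k B)
        · rw [map_add, hQ'val, hsum0]
      have hF2 : F = (MvPolynomial.C a * Pk - Fa * Q') + Fa * (Q' + Bk) + gk := by
        rw [hFeq]; ring
      rw [hF2]
      exact Ideal.add_mem _ (Ideal.add_mem _ hQ'mem (Ideal.mul_mem_left _ _ hmem2)) hgkmem
  -- assemble
  have hsets : {F : MvPolynomial (Fin n) R |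
        F ∈ RingHom.ker (reesPres I f hf : MvPolynomial (Fin n) R →+* reesAlgebra I) ∧
        F.IsHomogeneous 1}
      = {F : MvPolynomial (Fin n) R | F.IsHomogeneous 1 ∧ MvPolynomial.aeval f F = 0} := by
    ext G
    simp only [Set.mem_setOf_eq, RingHom.mem_ker]
    constructor
    · rintro ⟨h1, h2⟩
      exact ⟨h2, (reesPres_eq_zero_iff_homog I f hf h2).mp h1⟩
    · rintro ⟨h1, h2⟩
      exact ⟨(reesPres_eq_zero_iff_homog I f hf h1).mpr h2, h1⟩
  rw [hsets]
  apply le_antisymm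
  · intro F hF
    rw [RingHom.mem_ker] at hF
    have hcomp := (reesPres_eq_zero_iff I f hf F).mp hF
    have hFsum := MvPolynomial.sum_homogeneousComponent F
    rw [← hFsum]
    exact Ideal.sum_mem _ fun t _ =>
      main t _ (MvPolynomial.homogeneousComponent_isHomogeneous t F) (hcomp t)
  · rw [Ideal.span_le]
    rintro G ⟨h1, h2⟩
    rw [SetLike.mem_coe, RingHom.mem_ker]
    exact (reesPres_eq_zero_iff_homog I f hf h1).mpr h2


theorem forward_ker_eq {n : ℕ} (I : Ideal R) (f : Fin n → R) (hf : ∀ i, f i ∈ I)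
    (a : R) (haI : a ∈ I) (hgen : Ideal.span (Set.range f) = I)
    (hQ : RingHom.ker (reesPres I f hf : MvPolynomial (Fin n) R →+* reesAlgebra I) =
      Ideal.span {F : MvPolynomial (Fin n) R |
        F ∈ RingHom.ker (reesPres I f hf : MvPolynomial (Fin n) R →+* reesAlgebra I) ∧
        F.IsHomogeneous 1}) :
    RingHom.ker ((Ideal.Quotient.mk (aluffiIdeal I (Ideal.span {a}))).comp
            (reesPres I f hf : MvPolynomial (Fin n) R →+* reesAlgebra I)) =
          Ideal.span ({F : MvPolynomial (Fin n) R | ∃ b ∈ Ideal.span ({a} : Set R),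
              F = MvPolynomial.C b} ∪
            {F : MvPolynomial (Fin n) R | F.IsHomogeneous 1 ∧
              MvPolynomial.aeval f F ∈ Ideal.span ({a} : Set R)}) := by
  classical
  have haI' : a ∈ Ideal.span (Set.range f) := by rwa [hgen]
  obtain ⟨c, hc⟩ := (Submodule.mem_span_range_iff_exists_fun R).mp haI'
  set Fa : MvPolynomial (Fin n) R := ∑ i, MvPolynomial.C (c i) * MvPolynomial.X i with hFadef
  have hFa1 : Fa.IsHomogeneous 1 := by
    rw [← MvPolynomial.mem_homogeneousSubmodule]
    refine Submodule.sum_mem _ fun i _ => ?_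
    rw [MvPolynomial.mem_homogeneousSubmodule]
    have := (MvPolynomial.isHomogeneous_C (Fin n) (c i)).mul (MvPolynomial.isHomogeneous_X R i)
    simpa using this
  have hFaval : MvPolynomial.aeval f Fa = a := by
    rw [hFadef, map_sum]
    simpa [smul_eq_mul] using hc
  have hCaEl : reesPres I f hf (MvPolynomial.C a)
      = (⟨C a, C_mem_rees I a⟩ : reesAlgebra I) := by
    apply Subtype.ext
    rw [coe_reesPres]
    simp
  have hFaEl : reesPres I f hf Fa = (⟨C a * X, CX_mem_rees I haI⟩ : reesAlgebra I) := by
    apply Subtype.ext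
    rw [reesPres_homog I f hf hFa1, hFaval, pow_one]
  apply le_antisymm
  · intro F hF
    rw [RingHom.mem_ker, RingHom.comp_apply, Ideal.Quotient.eq_zero_iff_mem,
      aluffiIdeal_eq_span I a haI] at hF
    obtain ⟨r, s, hrs⟩ := Ideal.mem_span_pair.mp hF
    obtain ⟨P, hP⟩ := reesPres_surjective I f hf hgen r
    obtain ⟨B, hB⟩ := reesPres_surjective I f hf hgen s
    have hker : F - (P * MvPolynomial.C a + B * Fa) ∈
        RingHom.ker (reesPres I f hf : MvPolynomial (Fin n) R →+* reesAlgebra I) := by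
      rw [RingHom.mem_ker]
      show reesPres I f hf _ = 0
      rw [map_sub, map_add, map_mul, map_mul, hCaEl, hFaEl, hP, hB, hrs]
      exact sub_eq_zero.mpr rfl
    rw [hQ] at hker
    have hkle : Ideal.span {F : MvPolynomial (Fin n) R |
        F ∈ RingHom.ker (reesPres I f hf : MvPolynomial (Fin n) R →+* reesAlgebra I) ∧
        F.IsHomogeneous 1} ≤ Ideal.span ({F : MvPolynomial (Fin n) R | ∃ b ∈ Ideal.span ({a} : Set R),
              F = MvPolynomial.C b} ∪
            {F : MvPolynomial (Fin n) R | F.IsHomogeneous 1 ∧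
              MvPolynomial.aeval f F ∈ Ideal.span ({a} : Set R)}) := by
      apply Ideal.span_mono
      rintro G ⟨h1, h2⟩
      refine Set.mem_union_right _ ⟨h2, ?_⟩
      rw [RingHom.mem_ker] at h1
      rw [(reesPres_eq_zero_iff_homog I f hf h2).mp h1]
      exact Ideal.zero_mem _
    have h1 : P * MvPolynomial.C a ∈ Ideal.span ({F : MvPolynomial (Fin n) R | ∃ b ∈ Ideal.span ({a} : Set R),
              F = MvPolynomial.C b} ∪
            {F : MvPolynomial (Fin n) R | F.IsHomogeneous 1 ∧
              MvPolynomial.aeval f F ∈ Ideal.span ({a} : Set R)}) :=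
      Ideal.mul_mem_left _ _ (Ideal.subset_span (Set.mem_union_left _
        ⟨a, Ideal.mem_span_singleton_self a, rfl⟩))
    have h2 : B * Fa ∈ Ideal.span ({F : MvPolynomial (Fin n) R | ∃ b ∈ Ideal.span ({a} : Set R),
              F = MvPolynomial.C b} ∪
            {F : MvPolynomial (Fin n) R | F.IsHomogeneous 1 ∧
              MvPolynomial.aeval f F ∈ Ideal.span ({a} : Set R)}) :=
      Ideal.mul_mem_left _ _ (Ideal.subset_span (Set.mem_union_right _
        ⟨hFa1, by rw [hFaval]; exact Ideal.mem_span_singleton_self a⟩))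
    have := add_mem (hkle hker) (add_mem h1 h2)
    rwa [sub_add_cancel] at this
  · rw [Ideal.span_le]
    rintro G (⟨b, hb, rfl⟩ | ⟨h1, h2⟩)
    · rw [SetLike.mem_coe, RingHom.mem_ker, RingHom.comp_apply,
        Ideal.Quotient.eq_zero_iff_mem]
      refine Ideal.subset_span ⟨b, hb, Or.inl ?_⟩
      show ((reesPres I f hf (MvPolynomial.C b) : reesAlgebra I) : R[X]) = C b
      rw [coe_reesPres]
      simp
    · rw [SetLike.mem_coe, RingHom.mem_ker, RingHom.comp_apply,
        Ideal.Quotient.eq_zero_iff_mem]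
      refine Ideal.subset_span ⟨MvPolynomial.aeval f G, h2, Or.inr ?_⟩
      show ((reesPres I f hf G : reesAlgebra I) : R[X]) = C (MvPolynomial.aeval f G) * X
      rw [reesPres_homog I f hf h1, pow_one]

end Aux

/-- for `a ∈ I` a non-zero-divisor of a Noetherian ring `R`, the ideal `I`
is of linear type over `R` if and only if the natural surjection
`S_{R/(a)}(I/(a)) ↠ 𝒜_{R↠R/(a)}(I/(a))` is an isomorphism; the latter is expressed by
saying that, for every presentation, the kernel of `R[T] ↠ 𝒜` equals the kernel
`((a)R[T], degree-one forms F with F(f) ∈ (a))` of `R[T] ↠ S_{R/(a)}(I/(a))`. -/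
theorem linear_type_iff_sym_to_aluffi_iso [IsNoetherianRing R]
    (I : Ideal R) (a : R) (haI : a ∈ I) (hreg : a ∈ nonZeroDivisors R) :
    IsLinearType R I ↔
      ∀ (n : ℕ) (f : Fin n → R) (hf : ∀ i, f i ∈ I),
        Ideal.span (Set.range f) = I →
        RingHom.ker ((Ideal.Quotient.mk (aluffiIdeal I (Ideal.span {a}))).comp
            (reesPres I f hf : MvPolynomial (Fin n) R →+* reesAlgebra I)) =
          Ideal.span ({F : MvPolynomial (Fin n) R | ∃ b ∈ Ideal.span ({a} : Set R),
              F = MvPolynomial.C b} ∪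
            {F : MvPolynomial (Fin n) R | F.IsHomogeneous 1 ∧
              MvPolynomial.aeval f F ∈ Ideal.span ({a} : Set R)}) := by
  constructor
  · intro hlin n f hf hgen
    exact forward_ker_eq I f hf a haI hgen (hlin n f hf hgen)
  · intro hAl n f hf hgen
    exact backward_ker_eq I f hf a haI hreg hgen (hAl n f hf hgen)
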